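/- Let ℓ ≥ 1, μ = 2ℓ+2, and suppose a chain c consists of exactly ℓ nodes, each node v having capacity κ(v) ≥ log₂ μ and cost w_v = κ(v)(μ^{λ_v} - 1) with λ_v ≥ 0, satisfying the admission condition Σ_{v∈c} w_v/κ(v) ≤ ℓ. Then the total cost increase when each node v in c increases its load by 1/κ(v) satisfies Σ_{v∈c} κ(v)(μ^{λ_v + 1/κ(v)} - μ^{λ_v}) ≤ 2ℓ·log₂ μ. -/

import Mathlib

lemma two_rpow_le {t : ℝ} (ht0 : 0 ≤ t) (ht1 : t ≤ 1) : (2:ℝ) ^ t ≤ 1 + t := by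
  have h := convexOn_exp.2 (Set.mem_univ (Real.log 2)) (Set.mem_univ 0)
    ht0 (by linarith : (0:ℝ) ≤ 1 - t) (by ring)
  simp only [smul_eq_mul, mul_zero, add_zero, Real.exp_zero] at h
  rw [Real.exp_log (by norm_num : (0:ℝ) < 2)] at h
  rw [Real.rpow_def_of_pos (by norm_num : (0:ℝ) < 2)]
  rw [mul_comm] at h
  linarith

theorem stmt_4 {V : Type*} [DecidableEq V] (ℓ : ℕ) (hℓ : 1 ≤ ℓ) (μ : ℝ)
    (hμ : μ = 2 * ℓ + 2) (c : Finset V) (hc : c.card = ℓ)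
    (κ lam : V → ℝ)
    (hκ : ∀ v ∈ c, Real.logb 2 μ ≤ κ v)
    (hlam : ∀ v ∈ c, 0 ≤ lam v)
    (hadmit : ∑ v ∈ c, (κ v * (μ ^ lam v - 1)) / κ v ≤ (ℓ : ℝ)) :
    ∑ v ∈ c, κ v * (μ ^ (lam v + 1 / κ v) - μ ^ lam v) ≤
      2 * ℓ * Real.logb 2 μ := by
  have hℓ1 : (1:ℝ) ≤ ℓ := by exact_mod_cast hℓ
  have hμ4 : (4:ℝ) ≤ μ := by rw [hμ]; linarith
  have hμpos : (0:ℝ) < μ := by linarith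
  set L := Real.logb 2 μ with hL
  have hL2 : (2:ℝ) ≤ L := by
    have h4 : Real.logb 2 4 = 2 := by
      rw [show (4:ℝ) = 2 ^ (2:ℕ) by norm_num, Real.logb_pow]
      simp [Real.logb_self_eq_one]
    calc (2:ℝ) = Real.logb 2 4 := h4.symm
      _ ≤ L := Real.logb_le_logb_of_le (by norm_num) (by norm_num) hμ4
  have hLpos : (0:ℝ) < L := by linarith
  have key : ∀ v ∈ c, κ v * (μ ^ (lam v + 1 / κ v) - μ ^ lam v) ≤ μ ^ lam v * L := by
    intro v hv
    have hκv : L ≤ κ v := hκ v hv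
    have hκpos : 0 < κ v := lt_of_lt_of_le hLpos hκv
    have ht0 : 0 ≤ L / κ v := by positivity
    have ht1 : L / κ v ≤ 1 := by rw [div_le_one hκpos]; exact hκv
    have heq : μ ^ (1 / κ v) = (2:ℝ) ^ (L / κ v) := by
      rw [show L / κ v = L * (1 / κ v) by ring,
        Real.rpow_mul (by norm_num : (0:ℝ) ≤ 2),
        Real.rpow_logb (by norm_num) (by norm_num) hμpos]
    have h2t : μ ^ (1 / κ v) ≤ 1 + L / κ v := heq ▸ two_rpow_le ht0 ht1
    have hsplit : μ ^ (lam v + 1 / κ v) = μ ^ lam v * μ ^ (1 / κ v) :=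
      Real.rpow_add hμpos _ _
    have hpow : 0 ≤ μ ^ lam v := Real.rpow_nonneg (le_of_lt hμpos) _
    have hmul : κ v * (μ ^ (1 / κ v) - 1) ≤ L := by
      have := mul_le_mul_of_nonneg_left (sub_le_sub_right h2t 1) (le_of_lt hκpos)
      calc κ v * (μ ^ (1 / κ v) - 1) ≤ κ v * (1 + L / κ v - 1) := this
        _ = L := by field_simp; ring
    rw [hsplit]
    calc κ v * (μ ^ lam v * μ ^ (1 / κ v) - μ ^ lam v)
        = μ ^ lam v * (κ v * (μ ^ (1 / κ v) - 1)) := by ring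
      _ ≤ μ ^ lam v * L := mul_le_mul_of_nonneg_left hmul hpow
  have hsum : ∑ v ∈ c, μ ^ lam v ≤ 2 * ℓ := by
    have hadmit' : ∑ v ∈ c, (μ ^ lam v - 1) ≤ (ℓ : ℝ) := by
      refine le_trans (le_of_eq (Finset.sum_congr rfl fun v hv => ?_)) hadmit
      have hκpos : (0:ℝ) < κ v := lt_of_lt_of_le hLpos (hκ v hv)
      field_simp
    have := Finset.sum_sub_distrib (s := c) (f := fun v => μ ^ lam v) (g := fun _ => (1:ℝ))
    rw [this, Finset.sum_const, hc, nsmul_eq_mul, mul_one] at hadmit'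
    linarith
  calc ∑ v ∈ c, κ v * (μ ^ (lam v + 1 / κ v) - μ ^ lam v)
      ≤ ∑ v ∈ c, μ ^ lam v * L := Finset.sum_le_sum key
    _ = (∑ v ∈ c, μ ^ lam v) * L := (Finset.sum_mul ..).symm
    _ ≤ 2 * ℓ * L := mul_le_mul_of_nonneg_right hsum (le_of_lt hLpos)
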